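/- Let Ω_{2d} ⊆ ℝ² be a bounded measurable set with compact closure K. Let (α_j)_{j∈ℕ} and α be functions ℝ² → ℝ, each ContDiff ℝ 1, such that α_j → α and fderiv ℝ α_j → fderiv ℝ α uniformly on K. Let (u_j)_{j∈ℕ} and u be functions ℝ³ → ℝ³, each ContDiff ℝ 3, such that for each 0 ≤ i ≤ 3 the functions iteratedFDeriv ℝ i u_j converge to iteratedFDeriv ℝ i u uniformly on every compact subset of ℝ³. Let ℱ be a continuous real-valued function on ℝ³ × ℝ³ × L(ℝ³, ℝ³) × L²(ℝ³; ℝ³) × L³(ℝ³; ℝ³) (with Lⁱ the continuous i-multilinear maps ℝ³ → ℝ³). For s ∈ ℝ² write x_j(s) = (s₁, s₂, α_j(s)) and x(s) = (s₁, s₂, α(s)). Then ∫_{Ω_{2d}} ℱ(x_j(s), u_j(x_j(s)), iteratedFDeriv ℝ 1 u_j(x_j(s)), iteratedFDeriv ℝ 2 u_j(x_j(s)), iteratedFDeriv ℝ 3 u_j(x_j(s)))·√(1 + ‖∇α_j(s)‖²) ds → ∫_{Ω_{2d}} ℱ(x(s), u(x(s)), iteratedFDeriv ℝ 1 u(x(s)),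 iteratedFDeriv ℝ 2 u(x(s)), iteratedFDeriv ℝ 3 u(x(s)))·√(1 + ‖∇α(s)‖²) ds as j → ∞. -/

import Mathlib

open MeasureTheory Filter Set Topology

/-- The graph chart `s ↦ (s₁, s₂, α(s))` of the design variable `α`. -/
noncomputable def graphMap (α : EuclideanSpace ℝ (Fin 2) → ℝ)
    (s : EuclideanSpace ℝ (Fin 2)) : EuclideanSpace ℝ (Fin 3) :=
  (WithLp.equiv 2 (Fin 3 → ℝ)).symm ![s 0, s 1, α s]

section aux

local notation "E2" => EuclideanSpace ℝ (Fin 2)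
local notation "E3" => EuclideanSpace ℝ (Fin 3)

instance findim1 : FiniteDimensional ℝ (E3 [×1]→L[ℝ] E3) :=
  (continuousMultilinearCurryFin1 ℝ (EuclideanSpace ℝ (Fin 3))
    (EuclideanSpace ℝ (Fin 3))).symm.toLinearEquiv.finiteDimensional

instance findim2 : FiniteDimensional ℝ (E3 [×2]→L[ℝ] E3) :=
  (continuousMultilinearCurryLeftEquiv ℝ (fun _ : Fin 2 => EuclideanSpace ℝ (Fin 3))
    (EuclideanSpace ℝ (Fin 3))).symm.toLinearEquiv.finiteDimensional

instance findim3 : FiniteDimensional ℝ (E3 [×3]→L[ℝ] E3) :=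
  (continuousMultilinearCurryLeftEquiv ℝ (fun _ : Fin 3 => EuclideanSpace ℝ (Fin 3))
    (EuclideanSpace ℝ (Fin 3))).symm.toLinearEquiv.finiteDimensional

lemma graphMap_continuous {β : E2 → ℝ} (hβ : Continuous β) :
    Continuous (graphMap β) := by
  have h0 : Continuous fun s : E2 => s 0 :=
    (continuous_apply (0 : Fin 2)).comp (PiLp.continuous_ofLp 2 fun _ : Fin 2 => ℝ)
  have h1 : Continuous fun s : E2 => s 1 :=
    (continuous_apply (1 : Fin 2)).comp (PiLp.continuous_ofLp 2 fun _ : Fin 2 => ℝ)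
  have h : Continuous fun s : E2 => (![s 0, s 1, β s] : Fin 3 → ℝ) := by
    apply continuous_pi
    intro i
    fin_cases i
    · exact h0
    · exact h1
    · exact hβ
  exact (PiLp.continuous_toLp 2 fun _ : Fin 3 => ℝ).comp h

lemma dist_graphMap (β γ : E2 → ℝ) (s : E2) :
    dist (graphMap β s) (graphMap γ s) = dist (β s) (γ s) := by
  rw [EuclideanSpace.dist_eq, Fin.sum_univ_three]
  simp only [graphMap, WithLp.equiv_symm_apply, PiLp.toLp_apply, Matrix.cons_val_zero, Matrix.cons_val_one,
    Matrix.head_cons, Matrix.cons_val_two, Matrix.tail_cons, dist_self]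
  rw [show (0:ℝ)^2 + 0^2 + dist (β s) (γ s)^2 = dist (β s) (γ s)^2 by ring]
  exact Real.sqrt_sq dist_nonneg

lemma dist_iFD0 (f g : E3 → E3) (y : E3) :
    dist (iteratedFDeriv ℝ 0 f y) (iteratedFDeriv ℝ 0 g y) = dist (f y) (g y) := by
  rw [iteratedFDeriv_zero_eq_comp, iteratedFDeriv_zero_eq_comp]
  exact (continuousMultilinearCurryFin0 ℝ (EuclideanSpace ℝ (Fin 3))
    (EuclideanSpace ℝ (Fin 3))).symm.dist_map _ _

lemma sqrt_one_add_sq_le (r : ℝ) (hr : 0 ≤ r) : Real.sqrt (1 + r ^ 2) ≤ 1 + r := by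
  rw [show (1:ℝ) + r = Real.sqrt ((1 + r)^2) from (Real.sqrt_sq (by positivity)).symm]
  exact Real.sqrt_le_sqrt (by nlinarith)

end aux

theorem stmt16 (Ω2d : Set (EuclideanSpace ℝ (Fin 2)))
    (hΩ2dbd : IsCompact (closure Ω2d))
    (α : ℕ → EuclideanSpace ℝ (Fin 2) → ℝ) (αlim : EuclideanSpace ℝ (Fin 2) → ℝ)
    (hα : ∀ j, ContDiff ℝ 1 (α j)) (hαlim : ContDiff ℝ 1 αlim)
    (hαconv : TendstoUniformlyOn (fun j => α j) αlim atTop (closure Ω2d))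
    (hαconv' : TendstoUniformlyOn (fun j => fderiv ℝ (α j)) (fderiv ℝ αlim) atTop
      (closure Ω2d))
    (u : ℕ → EuclideanSpace ℝ (Fin 3) → EuclideanSpace ℝ (Fin 3))
    (ulim : EuclideanSpace ℝ (Fin 3) → EuclideanSpace ℝ (Fin 3))
    (hu : ∀ j, ContDiff ℝ 3 (u j)) (hulim : ContDiff ℝ 3 ulim)
    (huconv : ∀ i ≤ 3, ∀ C : Set (EuclideanSpace ℝ (Fin 3)), IsCompact C →
      TendstoUniformlyOn (fun j => iteratedFDeriv ℝ i (u j))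
        (iteratedFDeriv ℝ i ulim) atTop C)
    (F : EuclideanSpace ℝ (Fin 3) × EuclideanSpace ℝ (Fin 3) ×
        (EuclideanSpace ℝ (Fin 3) [×1]→L[ℝ] EuclideanSpace ℝ (Fin 3)) ×
        (EuclideanSpace ℝ (Fin 3) [×2]→L[ℝ] EuclideanSpace ℝ (Fin 3)) ×
        (EuclideanSpace ℝ (Fin 3) [×3]→L[ℝ] EuclideanSpace ℝ (Fin 3)) → ℝ)
    (hF : Continuous F) :
    Tendsto (fun j => ∫ s in Ω2d,
        F (graphMap (α j) s, u j (graphMap (α j) s),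
            iteratedFDeriv ℝ 1 (u j) (graphMap (α j) s),
            iteratedFDeriv ℝ 2 (u j) (graphMap (α j) s),
            iteratedFDeriv ℝ 3 (u j) (graphMap (α j) s)) *
          Real.sqrt (1 + ‖fderiv ℝ (α j) s‖ ^ 2)) atTop
      (𝓝 (∫ s in Ω2d,
        F (graphMap αlim s, ulim (graphMap αlim s),
            iteratedFDeriv ℝ 1 ulim (graphMap αlim s),
            iteratedFDeriv ℝ 2 ulim (graphMap αlim s),
            iteratedFDeriv ℝ 3 ulim (graphMap αlim s)) *
          Real.sqrt (1 + ‖fderiv ℝ αlim s‖ ^ 2))) := by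
  set K2 : Set (EuclideanSpace ℝ (Fin 2)) := closure Ω2d with hK2
  -- uniform convergence of the graph maps
  have hgconv : TendstoUniformlyOn (fun j => graphMap (α j)) (graphMap αlim) atTop K2 := by
    rw [Metric.tendstoUniformlyOn_iff] at hαconv ⊢
    intro ε hε
    filter_upwards [hαconv ε hε] with j hj s hs
    rw [dist_graphMap]
    exact hj s hs
  -- the compact set containing all graph points
  have hXcomp : IsCompact (graphMap αlim '' K2) :=
    hΩ2dbd.image (graphMap_continuous hαlim.continuous)
  set C : Set (EuclideanSpace ℝ (Fin 3)) := Metric.cthickening 1 (graphMap αlim '' K2) with hC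
  have hCcomp : IsCompact C := hXcomp.cthickening
  have hXsub : graphMap αlim '' K2 ⊆ C := Metric.self_subset_cthickening _
  -- eventually all graph points lie in C
  have hgC : ∀ᶠ j in atTop, ∀ s ∈ K2, graphMap (α j) s ∈ C := by
    rw [Metric.tendstoUniformlyOn_iff] at hgconv
    filter_upwards [hgconv 1 one_pos] with j hj s hs
    exact Metric.mem_cthickening_of_dist_le _ _ _ _ (mem_image_of_mem _ hs)
      (by rw [dist_comm]; exact (hj s hs).le)
  -- uniform convergence of u itself on C
  have hu0 : TendstoUniformlyOn (fun j => u j) ulim atTop C := by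
    have h := huconv 0 (by norm_num) C hCcomp
    rw [Metric.tendstoUniformlyOn_iff] at h ⊢
    intro ε hε
    filter_upwards [h ε hε] with j hj y hy
    rw [← dist_iFD0 ulim (u j) y]
    exact hj y hy
  have hu1 := huconv 1 (by norm_num) C hCcomp
  have hu2 := huconv 2 (by norm_num) C hCcomp
  have hu3 := huconv 3 (by norm_num) C hCcomp
  -- continuity of all limit data
  have hculim : Continuous ulim := hulim.continuous
  have hc1 : Continuous (iteratedFDeriv ℝ 1 ulim) :=
    hulim.continuous_iteratedFDeriv (by norm_num)
  have hc2 : Continuous (iteratedFDeriv ℝ 2 ulim) :=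
    hulim.continuous_iteratedFDeriv (by norm_num)
  have hc3 : Continuous (iteratedFDeriv ℝ 3 ulim) :=
    hulim.continuous_iteratedFDeriv (by norm_num)
  -- finite measure on the restriction
  have hfin : IsFiniteMeasure (volume.restrict Ω2d) := by
    constructor
    rw [Measure.restrict_apply_univ]
    exact lt_of_le_of_lt (measure_mono subset_closure) hΩ2dbd.measure_lt_top
    -- the compact set of tuple values and the bound on F over it
  set T0 := Metric.cthickening 1 (ulim '' C) with hT0
  set T1 := Metric.cthickening 1 (iteratedFDeriv ℝ 1 ulim '' C) with hT1
  set T2 := Metric.cthickening 1 (iteratedFDeriv ℝ 2 ulim '' C) with hT2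
  set T3 := Metric.cthickening 1 (iteratedFDeriv ℝ 3 ulim '' C) with hT3
  have hTcomp : IsCompact (C ×ˢ (T0 ×ˢ (T1 ×ˢ (T2 ×ˢ T3)))) :=
    hCcomp.prod (((hCcomp.image hculim).cthickening).prod
      (((hCcomp.image hc1).cthickening).prod
        (((hCcomp.image hc2).cthickening).prod ((hCcomp.image hc3).cthickening))))
  obtain ⟨B, hB⟩ := hTcomp.exists_bound_of_continuousOn hF.continuousOn
  obtain ⟨M, hM⟩ := hΩ2dbd.exists_bound_of_continuousOn
    (hαlim.continuous_fderiv one_ne_zero).continuousOn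
  set B' := max B 0 with hB'
  set M' := max M 0 with hM'
  -- apply dominated convergence
  apply MeasureTheory.tendsto_integral_filter_of_dominated_convergence
    (fun _ => B' * (2 + M'))
  · -- a.e. strong measurability
    apply Filter.Eventually.of_forall
    intro j
    have hgc : Continuous (graphMap (α j)) := graphMap_continuous (hα j).continuous
    have hcu : Continuous (u j) := (hu j).continuous
    have hcu1 : Continuous (iteratedFDeriv ℝ 1 (u j)) :=
      (hu j).continuous_iteratedFDeriv (by norm_num)
    have hcu2 : Continuous (iteratedFDeriv ℝ 2 (u j)) :=
      (hu j).continuous_iteratedFDeriv (by norm_num)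
    have hcu3 : Continuous (iteratedFDeriv ℝ 3 (u j)) :=
      (hu j).continuous_iteratedFDeriv (by norm_num)
    have hcd : Continuous (fderiv ℝ (α j)) := (hα j).continuous_fderiv one_ne_zero
    exact ((hF.comp (hgc.prodMk ((hcu.comp hgc).prodMk (((hcu1.comp hgc)).prodMk
      ((hcu2.comp hgc).prodMk (hcu3.comp hgc)))))).mul
      (Real.continuous_sqrt.comp (continuous_const.add (hcd.norm.pow 2)))).aestronglyMeasurable
  · -- the uniform bound
    filter_upwards [hgC, (Metric.tendstoUniformlyOn_iff.1 hu0) 1 one_pos,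
      (Metric.tendstoUniformlyOn_iff.1 hu1) 1 one_pos,
      (Metric.tendstoUniformlyOn_iff.1 hu2) 1 one_pos,
      (Metric.tendstoUniformlyOn_iff.1 hu3) 1 one_pos,
      (Metric.tendstoUniformlyOn_iff.1 hαconv') 1 one_pos]
      with j h1 h2 h3 h4 h5 h6
    apply Filter.Eventually.filter_mono (ae_mono (Measure.restrict_mono subset_closure le_rfl))
    apply ae_restrict_of_forall_mem isClosed_closure.measurableSet
    intro s hs
    have hyC : graphMap (α j) s ∈ C := h1 s hs
    have hmem : (graphMap (α j) s, u j (graphMap (α j) s),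
        iteratedFDeriv ℝ 1 (u j) (graphMap (α j) s),
        iteratedFDeriv ℝ 2 (u j) (graphMap (α j) s),
        iteratedFDeriv ℝ 3 (u j) (graphMap (α j) s)) ∈ C ×ˢ (T0 ×ˢ (T1 ×ˢ (T2 ×ˢ T3))) := by
      refine ⟨hyC, ?_, ?_, ?_, ?_⟩
      · exact Metric.mem_cthickening_of_dist_le _ _ _ _ (mem_image_of_mem _ hyC)
          (by rw [dist_comm]; exact (h2 _ hyC).le)
      · exact Metric.mem_cthickening_of_dist_le _ _ _ _ (mem_image_of_mem _ hyC)
          (by rw [dist_comm]; exact (h3 _ hyC).le)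
      · exact Metric.mem_cthickening_of_dist_le _ _ _ _ (mem_image_of_mem _ hyC)
          (by rw [dist_comm]; exact (h4 _ hyC).le)
      · exact Metric.mem_cthickening_of_dist_le _ _ _ _ (mem_image_of_mem _ hyC)
          (by rw [dist_comm]; exact (h5 _ hyC).le)
    have hFb : ‖F (graphMap (α j) s, u j (graphMap (α j) s),
        iteratedFDeriv ℝ 1 (u j) (graphMap (α j) s),
        iteratedFDeriv ℝ 2 (u j) (graphMap (α j) s),
        iteratedFDeriv ℝ 3 (u j) (graphMap (α j) s))‖ ≤ B' := le_trans (hB _ hmem) (le_max_left _ _)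
    have hdb : ‖fderiv ℝ (α j) s‖ ≤ M' + 1 := by
      have h6' := h6 s hs
      have hd1 : ‖fderiv ℝ (α j) s‖ - ‖fderiv ℝ αlim s‖ ≤
          ‖fderiv ℝ (α j) s - fderiv ℝ αlim s‖ := norm_sub_norm_le _ _
      rw [← dist_eq_norm, dist_comm] at hd1
      have hMl : ‖fderiv ℝ αlim s‖ ≤ M' := le_trans (hM s hs) (le_max_left _ _)
      linarith
    have hsq : Real.sqrt (1 + ‖fderiv ℝ (α j) s‖ ^ 2) ≤ 2 + M' := by
      have := sqrt_one_add_sq_le ‖fderiv ℝ (α j) s‖ (norm_nonneg _)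
      linarith
    rw [Real.norm_eq_abs, abs_mul, abs_of_nonneg (Real.sqrt_nonneg _)]
    have hBnn : (0:ℝ) ≤ B' := le_max_right _ _
    rw [← Real.norm_eq_abs]
    exact mul_le_mul hFb hsq (Real.sqrt_nonneg _) hBnn
  · exact integrable_const _
  · -- pointwise convergence
    apply Filter.Eventually.filter_mono (ae_mono (Measure.restrict_mono subset_closure le_rfl))
    apply ae_restrict_of_forall_mem isClosed_closure.measurableSet
    intro s hs
    have hx : Tendsto (fun j => graphMap (α j) s) atTop (𝓝 (graphMap αlim s)) :=
      hgconv.tendsto_at hs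
    have hxK : graphMap αlim s ∈ graphMap αlim '' K2 := mem_image_of_mem _ hs
    have hCn : C ∈ 𝓝 (graphMap αlim s) := by
      refine Filter.mem_of_superset (Metric.ball_mem_nhds _ one_pos) (fun y hy => ?_)
      exact Metric.mem_cthickening_of_dist_le y _ 1 _ hxK (le_of_lt hy)
    have hxC : Tendsto (fun j => graphMap (α j) s) atTop (𝓝[C] (graphMap αlim s)) := by
      rw [nhdsWithin_eq_nhds.mpr hCn]; exact hx
    have h_u : Tendsto (fun j => u j (graphMap (α j) s)) atTop (𝓝 (ulim (graphMap αlim s))) :=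
      hu0.tendsto_comp hculim.continuousWithinAt hxC
    have h_1 : Tendsto (fun j => iteratedFDeriv ℝ 1 (u j) (graphMap (α j) s)) atTop
        (𝓝 (iteratedFDeriv ℝ 1 ulim (graphMap αlim s))) :=
      hu1.tendsto_comp hc1.continuousWithinAt hxC
    have h_2 : Tendsto (fun j => iteratedFDeriv ℝ 2 (u j) (graphMap (α j) s)) atTop
        (𝓝 (iteratedFDeriv ℝ 2 ulim (graphMap αlim s))) :=
      hu2.tendsto_comp hc2.continuousWithinAt hxC
    have h_3 : Tendsto (fun j => iteratedFDeriv ℝ 3 (u j) (graphMap (α j) s)) atTop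
        (𝓝 (iteratedFDeriv ℝ 3 ulim (graphMap αlim s))) :=
      hu3.tendsto_comp hc3.continuousWithinAt hxC
    have hFt := (hF.tendsto _).comp
      (hx.prodMk_nhds (h_u.prodMk_nhds (h_1.prodMk_nhds (h_2.prodMk_nhds h_3))))
    have h_d : Tendsto (fun j => fderiv ℝ (α j) s) atTop (𝓝 (fderiv ℝ αlim s)) :=
      hαconv'.tendsto_at hs
    have h_sqrt : Tendsto (fun j => Real.sqrt (1 + ‖fderiv ℝ (α j) s‖ ^ 2)) atTop
        (𝓝 (Real.sqrt (1 + ‖fderiv ℝ αlim s‖ ^ 2))) :=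
      ((Real.continuous_sqrt.comp (continuous_const.add (continuous_norm.pow 2))).tendsto _).comp h_d
    exact hFt.mul h_sqrt
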